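/- Let s > 0 and let P satisfy H1. Fix x₀ > 0 and suppose the integral ∫_{x₀}^∞ P(z)·z^{−1−2/s} dz is finite. Then for every ε > 0, setting γ₀ = x₀^{1/s} · ( (2/s)·∫_{x₀}^∞ P(z)·z^{−1−2/s} dz + ε² )^{1/2}, there exists a positive solution γ of the Dyson–Schwinger ODE on [x₀, ∞) with γ(x₀) = γ₀. In particular, positive global solutions exist. -/

import Mathlib

open Real MeasureTheory Filter Set

noncomputable section

/-- `γ` is a positive solution of the Dyson–Schwinger ODE
`γ'(x) = (γ(x) + γ(x)² − P(x)) / (s·x·γ(x))` on the set `I`. -/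
def IsDSSolution (s : ℝ) (P γ : ℝ → ℝ) (I : Set ℝ) : Prop :=
  (∀ x ∈ I, 0 < γ x) ∧
    ∀ x ∈ I, HasDerivWithinAt γ ((γ x + (γ x) ^ 2 - P x) / (s * x * γ x)) I x

/-- Hypothesis H1: `P` is twice continuously differentiable on `[0,∞)`,
`P 0 = 0`, and `P x > 0` for `x > 0`. -/
def H1 (P : ℝ → ℝ) : Prop :=
  ContDiffOn ℝ 2 P (Set.Ici 0) ∧ P 0 = 0 ∧ ∀ x > (0 : ℝ), 0 < P x

/-- Hypothesis H2: `P` is strictly increasing on `[0,∞)`. -/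
def H2 (P : ℝ → ℝ) : Prop := StrictMonoOn P (Set.Ici 0)

/-- The nullcline `γ_c(x) = (√(1 + 4 P x) − 1)/2`. -/
def gammaC (P : ℝ → ℝ) (x : ℝ) : ℝ := (Real.sqrt (1 + 4 * P x) - 1) / 2

namespace DSAux

/-- Truncated square root, Lipschitz on all of `ℝ`. -/
def qf (ε y : ℝ) : ℝ := Real.sqrt (max y (ε ^ 2))

lemma qf_nonneg (ε y : ℝ) : 0 ≤ qf ε y := Real.sqrt_nonneg _

lemma qf_ge {ε : ℝ} (hε : 0 < ε) (y : ℝ) : ε ≤ qf ε y := by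
  have : Real.sqrt (ε ^ 2) ≤ qf ε y :=
    Real.sqrt_le_sqrt (le_max_right _ _)
  rwa [Real.sqrt_sq hε.le] at this

lemma qf_eq {ε y : ℝ} (h : ε ^ 2 ≤ y) : qf ε y = Real.sqrt y := by
  rw [qf, max_eq_left h]

lemma qf_continuous (ε : ℝ) : Continuous (qf ε) :=
  Real.continuous_sqrt.comp (continuous_id.max continuous_const)

lemma qf_le {ε y M : ℝ} (hM : |y| ≤ M) : qf ε y ≤ Real.sqrt (M + ε ^ 2) := by
  apply Real.sqrt_le_sqrt
  rcases le_total y (ε ^ 2) with h | h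
  · rw [max_eq_right h]
    nlinarith [abs_nonneg y]
  · rw [max_eq_left h]
    nlinarith [le_abs_self y]

lemma sqrt_lip {ε a b : ℝ} (hε : 0 < ε) (ha : ε ^ 2 ≤ a) (hb : ε ^ 2 ≤ b) :
    |Real.sqrt a - Real.sqrt b| ≤ |a - b| / (2 * ε) := by
  have h2ε : 0 < 2 * ε := by linarith
  wlog hab : b ≤ a generalizing a b
  · rw [abs_sub_comm, abs_sub_comm a b]
    exact this hb ha (le_of_not_ge hab)
  have ha0 : 0 ≤ a := le_trans (by positivity) ha
  have hb0 : 0 ≤ b := le_trans (by positivity) hb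
  have hsa : ε ≤ Real.sqrt a := by
    have := Real.sqrt_le_sqrt ha
    rwa [Real.sqrt_sq hε.le] at this
  have hsb : ε ≤ Real.sqrt b := by
    have := Real.sqrt_le_sqrt hb
    rwa [Real.sqrt_sq hε.le] at this
  have hsba : Real.sqrt b ≤ Real.sqrt a := Real.sqrt_le_sqrt hab
  rw [abs_of_nonneg (sub_nonneg.2 hsba), abs_of_nonneg (sub_nonneg.2 hab),
    le_div_iff₀ h2ε]
  nlinarith [Real.sq_sqrt ha0, Real.sq_sqrt hb0, Real.sqrt_nonneg a, Real.sqrt_nonneg b]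

lemma qf_lip {ε : ℝ} (hε : 0 < ε) (a b : ℝ) :
    |qf ε a - qf ε b| ≤ |a - b| / (2 * ε) := by
  have h1 : |qf ε a - qf ε b| ≤ |max a (ε ^ 2) - max b (ε ^ 2)| / (2 * ε) :=
    sqrt_lip hε (le_max_right _ _) (le_max_right _ _)
  have h2 : |max a (ε ^ 2) - max b (ε ^ 2)| ≤ |a - b| := abs_max_sub_max_le_abs _ _ _
  calc |qf ε a - qf ε b| ≤ |max a (ε ^ 2) - max b (ε ^ 2)| / (2 * ε) := h1
    _ ≤ |a - b| / (2 * ε) := by gcongr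

/-- The weight `z ^ (-1-1/s)`. -/
def wf (s z : ℝ) : ℝ := z ^ (-1 - 1 / s)

/-- The forcing term `P z / z ^ (1+2/s)`. -/
def Pfn (s : ℝ) (P : ℝ → ℝ) (z : ℝ) : ℝ := P z / z ^ (1 + 2 / s)

/-- The integrand of the fixed-point equation. -/
def phi (s ε : ℝ) (P h : ℝ → ℝ) (z : ℝ) : ℝ :=
  2 / s * (qf ε (h z) * wf s z - Pfn s P z)

/-- Antiderivative of `wf`. -/
def Af (s x₀ y : ℝ) : ℝ := s * (x₀ ^ (-1 / s) - y ^ (-1 / s))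

variable {s ε x₀ : ℝ} {P h : ℝ → ℝ}

lemma wf_pos {z : ℝ} (hz : 0 < z) : 0 < wf s z := Real.rpow_pos_of_pos hz _

lemma rpow_contOn (c : ℝ) : ContinuousOn (fun z : ℝ => z ^ c) (Ioi 0) := fun z hz =>
  (Real.continuousAt_rpow_const z c (Or.inl (ne_of_gt hz))).continuousWithinAt

lemma wf_cont : ContinuousOn (wf s) (Ioi 0) := rpow_contOn _

lemma Pfn_cont (hPc : ContinuousOn P (Ici 0)) : ContinuousOn (Pfn s P) (Ioi 0) :=
  (hPc.mono Ioi_subset_Ici_self).div (rpow_contOn _)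
    (fun z hz => ne_of_gt (Real.rpow_pos_of_pos hz _))

lemma Pfn_nonneg (hPnn : ∀ x, 0 < x → 0 ≤ P x) {z : ℝ} (hz : 0 < z) : 0 ≤ Pfn s P z :=
  div_nonneg (hPnn z hz) (Real.rpow_pos_of_pos hz _).le

lemma phi_cont (hPc : ContinuousOn P (Ici 0)) (hh : Continuous h) :
    ContinuousOn (phi s ε P h) (Ioi 0) :=
  continuousOn_const.mul
    ((((qf_continuous ε).comp hh).continuousOn.mul wf_cont).sub (Pfn_cont hPc))

lemma uIcc_subset (hx₀ : 0 < x₀) {x : ℝ} (hx : x₀ ≤ x) : uIcc x₀ x ⊆ Ioi 0 := by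
  rw [uIcc_of_le hx]
  exact fun z hz => lt_of_lt_of_le hx₀ hz.1

lemma intInt (hx₀ : 0 < x₀) {g : ℝ → ℝ} (hg : ContinuousOn g (Ioi 0)) {x : ℝ}
    (hx : x₀ ≤ x) : IntervalIntegrable g volume x₀ x :=
  (hg.mono (uIcc_subset hx₀ hx)).intervalIntegrable

lemma wf_integrable (hs : 0 < s) (hx₀ : 0 < x₀) : IntegrableOn (wf s) (Ici x₀) := by
  rw [integrableOn_Ici_iff_integrableOn_Ioi]
  exact integrableOn_Ioi_rpow_of_lt (by
    have : 0 < 1 / s := by positivity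
    linarith) hx₀

lemma ftc (hε : 0 < ε) (hx₀ : 0 < x₀) (hPc : ContinuousOn P (Ici 0))
    (hh : Continuous h) {x : ℝ} (hx : x₀ ≤ x) :
    HasDerivWithinAt (fun y => ∫ z in x₀..y, phi s ε P h z) (phi s ε P h x) (Ici x₀) x := by
  have hφ := phi_cont (s := s) (ε := ε) hPc hh
  rcases eq_or_lt_of_le hx with heq | hlt
  · subst heq
    refine intervalIntegral.integral_hasDerivWithinAt_right (t := Ioi x₀)
      (intInt hx₀ hφ le_rfl) ?_ ?_
    · exact ⟨Ioi 0, mem_nhdsWithin_of_mem_nhds (Ioi_mem_nhds hx₀),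
        hφ.aestronglyMeasurable measurableSet_Ioi⟩
    · exact (hφ x₀ hx₀).mono (fun z hz => lt_trans hx₀ hz)
  · have hx0 : (0 : ℝ) < x := lt_trans hx₀ hlt
    exact (intervalIntegral.integral_hasDerivAt_right (intInt hx₀ hφ hx)
      (hφ.stronglyMeasurableAtFilter isOpen_Ioi x hx0)
      (hφ.continuousAt (Ioi_mem_nhds hx0))).hasDerivWithinAt

lemma Af_cont : ContinuousOn (Af s x₀) (Ioi 0) :=
  continuousOn_const.mul (continuousOn_const.sub (rpow_contOn _))

lemma Af_self : Af s x₀ x₀ = 0 := by simp [Af]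

lemma Af_nonneg (hs : 0 < s) (hx₀ : 0 < x₀) {y : ℝ} (hy : x₀ ≤ y) : 0 ≤ Af s x₀ y := by
  have hneg : -1 / s ≤ 0 := by
    rw [neg_div]
    exact neg_nonpos.2 (by positivity)
  have hle : y ^ (-1 / s) ≤ x₀ ^ (-1 / s) :=
    Real.rpow_le_rpow_of_nonpos hx₀ hy hneg
  have h' : 0 ≤ x₀ ^ (-1 / s) - y ^ (-1 / s) := by linarith
  exact mul_nonneg hs.le h'

lemma Af_le (hs : 0 < s) (hx₀ : 0 < x₀) {y : ℝ} (hy : x₀ ≤ y) :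
    Af s x₀ y ≤ s * x₀ ^ (-1 / s) := by
  have h0 : (0:ℝ) < y := lt_of_lt_of_le hx₀ hy
  have : 0 ≤ y ^ (-1 / s) := (Real.rpow_pos_of_pos h0 _).le
  have h' : x₀ ^ (-1 / s) - y ^ (-1 / s) ≤ x₀ ^ (-1 / s) := by linarith
  exact mul_le_mul_of_nonneg_left h' hs.le

lemma Af_deriv (hs : 0 < s) {y : ℝ} (hy : 0 < y) : HasDerivAt (Af s x₀) (wf s y) y := by
  have h1 : HasDerivAt (fun y : ℝ => y ^ (-1 / s)) ((-1 / s) * y ^ (-1 / s - 1)) y :=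
    Real.hasDerivAt_rpow_const (Or.inl (ne_of_gt hy))
  have h2 := (h1.const_sub (x₀ ^ (-1 / s))).const_mul s
  refine h2.congr_deriv (Eq.symm ?_)
  have : -1 / s - 1 = -1 - 1 / s := by ring
  rw [this]
  field_simp [wf]
  rw [wf]
  congr 1
  field_simp

lemma Af_int (hs : 0 < s) (hx₀ : 0 < x₀) (n : ℕ) {x : ℝ} (hx : x₀ ≤ x) :
    ∫ z in x₀..x, (Af s x₀ z) ^ n * wf s z = (Af s x₀ x) ^ (n + 1) / (n + 1) := by
  have hne : ((n : ℝ) + 1) ≠ 0 := by positivity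
  have hderiv : ∀ z ∈ uIcc x₀ x,
      HasDerivAt (fun y => (Af s x₀ y) ^ (n + 1) / ((n : ℝ) + 1))
        ((Af s x₀ z) ^ n * wf s z) z := by
    intro z hz
    have hz0 : (0:ℝ) < z := uIcc_subset hx₀ hx hz
    have := ((Af_deriv (x₀ := x₀) hs hz0).pow (n + 1)).div_const ((n : ℝ) + 1)
    refine this.congr_deriv (Eq.symm ?_)
    push_cast
    field_simp
  have := intervalIntegral.integral_eq_sub_of_hasDerivAt hderiv
    (intInt hx₀ ((Af_cont.pow n).mul wf_cont) hx)
  rw [this, Af_self, zero_pow (Nat.succ_ne_zero n)]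
  push_cast
  ring

lemma main (hs : 0 < s) (hε : 0 < ε) (hx₀ : 0 < x₀)
    (hPc : ContinuousOn P (Ici 0)) (hPnn : ∀ x, 0 < x → 0 ≤ P x)
    (hInt : IntegrableOn (Pfn s P) (Ici x₀)) :
    ∃ γ : ℝ → ℝ, IsDSSolution s P γ (Ici x₀) ∧
      γ x₀ = x₀ ^ (1 / s) *
        Real.sqrt (2 / s * (∫ z in Ici x₀, Pfn s P z) + ε ^ 2) := by
  have h2s : 0 < 2 / s := by positivity
  set Dint := ∫ z in Ici x₀, Pfn s P z with hD
  set C := 2 / s * Dint + ε ^ 2 with hC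
  set Jw := ∫ z in Ici x₀, wf s z with hJ
  have hmem : ∀ z : ℝ, x₀ ≤ z → (0:ℝ) < z := fun z hz => lt_of_lt_of_le hx₀ hz
  have hPfnn : ∀ z ∈ Ici x₀, 0 ≤ Pfn s P z := fun z hz => Pfn_nonneg hPnn (hmem z hz)
  have hDnn : 0 ≤ Dint := setIntegral_nonneg measurableSet_Ici hPfnn
  have hJnn : 0 ≤ Jw := setIntegral_nonneg measurableSet_Ici
    (fun z hz => (wf_pos (hmem z hz)).le)
  have hwint := wf_integrable (x₀ := x₀) hs hx₀
  -- tail bounds for the two pieces of the integrand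
  have htailP : ∀ x, x₀ ≤ x →
      0 ≤ (∫ z in x₀..x, Pfn s P z) ∧ (∫ z in x₀..x, Pfn s P z) ≤ Dint := by
    intro x hx
    rw [intervalIntegral.integral_of_le hx]
    constructor
    · exact setIntegral_nonneg measurableSet_Ioc (fun z hz => hPfnn z (le_of_lt hz.1))
    · exact setIntegral_mono_set hInt
        ((ae_restrict_iff' measurableSet_Ici).2 (ae_of_all _ hPfnn))
        (HasSubset.Subset.eventuallyLE (fun z hz => le_of_lt hz.1))
  have htailW : ∀ x, x₀ ≤ x → (∫ z in x₀..x, wf s z) ≤ Jw := by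
    intro x hx
    rw [intervalIntegral.integral_of_le hx]
    exact setIntegral_mono_set hwint
      ((ae_restrict_iff' measurableSet_Ici).2
        (ae_of_all _ (fun z hz => (wf_pos (hmem z hz)).le)))
      (HasSubset.Subset.eventuallyLE (fun z hz => le_of_lt hz.1))
  have hqwcont : ∀ g : ℝ → ℝ, Continuous g →
      ContinuousOn (fun z => qf ε (g z) * wf s z) (Ioi 0) := fun g hg =>
    ((qf_continuous ε).comp hg).continuousOn.mul wf_cont
  have htailQ : ∀ g : ℝ → ℝ, Continuous g → ∀ M, 0 ≤ M → (∀ z, qf ε (g z) ≤ M) →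
      ∀ x, x₀ ≤ x → 0 ≤ (∫ z in x₀..x, qf ε (g z) * wf s z) ∧
        (∫ z in x₀..x, qf ε (g z) * wf s z) ≤ M * Jw := by
    intro g hg M hM hb x hx
    constructor
    · exact intervalIntegral.integral_nonneg hx
        (fun z hz => mul_nonneg (qf_nonneg _ _) (wf_pos (hmem z hz.1)).le)
    · calc (∫ z in x₀..x, qf ε (g z) * wf s z)
          ≤ ∫ z in x₀..x, M * wf s z := by
            apply intervalIntegral.integral_mono_on hx (intInt hx₀ (hqwcont g hg) hx)
              (intInt hx₀ (continuousOn_const.mul wf_cont) hx)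
            exact fun z hz => mul_le_mul_of_nonneg_right (hb z) (wf_pos (hmem z hz.1)).le
        _ = M * ∫ z in x₀..x, wf s z := intervalIntegral.integral_const_mul _ _
        _ ≤ M * Jw := mul_le_mul_of_nonneg_left (htailW x hx) hM
  have hsplit : ∀ g : ℝ → ℝ, Continuous g → ∀ x, x₀ ≤ x →
      (∫ z in x₀..x, phi s ε P g z) =
        2 / s * ((∫ z in x₀..x, qf ε (g z) * wf s z) - ∫ z in x₀..x, Pfn s P z) := by
    intro g hg x hx
    rw [← intervalIntegral.integral_sub (intInt hx₀ (hqwcont g hg) hx)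
      (intInt hx₀ (Pfn_cont hPc) hx), ← intervalIntegral.integral_const_mul]
    rfl
  -- the fixed point map
  have hMg : ∀ g : BoundedContinuousFunction ℝ ℝ, ∀ z,
      qf ε (g z) ≤ Real.sqrt (‖g‖ + ε ^ 2) := by
    intro g z
    apply qf_le
    rw [← Real.norm_eq_abs]
    exact g.norm_coe_le_norm z
  have hMnn : ∀ g : BoundedContinuousFunction ℝ ℝ, 0 ≤ Real.sqrt (‖g‖ + ε ^ 2) :=
    fun g => Real.sqrt_nonneg _
  have hTbdd : ∀ g : BoundedContinuousFunction ℝ ℝ, ∀ x : ℝ,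
      ‖C + ∫ z in x₀..max x x₀, phi s ε P g z‖ ≤
        |C| + 2 / s * (Real.sqrt (‖g‖ + ε ^ 2) * Jw + Dint) := by
    intro g x
    have hy : x₀ ≤ max x x₀ := le_max_right _ _
    have h1 := htailQ g g.continuous _ (hMnn g) (hMg g) _ hy
    have h2 := htailP _ hy
    rw [hsplit g g.continuous _ hy]
    have habs : |2 / s * ((∫ z in x₀..max x x₀, qf ε (g z) * wf s z) -
        ∫ z in x₀..max x x₀, Pfn s P z)| ≤
        2 / s * (Real.sqrt (‖g‖ + ε ^ 2) * Jw + Dint) := by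
      rw [abs_mul, abs_of_pos h2s]
      apply mul_le_mul_of_nonneg_left _ h2s.le
      rw [abs_le]
      constructor
      · have := h1.1; have := h2.2
        have hq : 0 ≤ Real.sqrt (‖g‖ + ε ^ 2) * Jw := mul_nonneg (hMnn g) hJnn
        linarith
      · have := h1.2; have := h2.1
        linarith
    calc ‖C + _‖ ≤ |C| + |2 / s * ((∫ z in x₀..max x x₀, qf ε (g z) * wf s z) -
          ∫ z in x₀..max x x₀, Pfn s P z)| := norm_add_le _ _
      _ ≤ _ := by linarith
  have hTcont : ∀ g : BoundedContinuousFunction ℝ ℝ,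
      Continuous (fun x => C + ∫ z in x₀..max x x₀, phi s ε P g z) := by
    intro g
    apply continuous_const.add
    have hGcont : ContinuousOn (fun y => ∫ z in x₀..y, phi s ε P g z) (Ici x₀) :=
      fun x hx => (ftc hε hx₀ hPc g.continuous hx).continuousWithinAt
    exact hGcont.comp_continuous (continuous_id.max continuous_const)
      (fun x => mem_Ici.2 (le_max_right _ _))
  set T : BoundedContinuousFunction ℝ ℝ → BoundedContinuousFunction ℝ ℝ := fun g =>
    BoundedContinuousFunction.ofNormedAddCommGroup _ (hTcont g) _ (hTbdd g) with hTdef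
  have hTcoe : ∀ g : BoundedContinuousFunction ℝ ℝ, ∀ x : ℝ,
      T g x = C + ∫ z in x₀..max x x₀, phi s ε P g z := fun g x => rfl
  have hTpt : ∀ g : BoundedContinuousFunction ℝ ℝ, ∀ x : ℝ, x₀ ≤ x →
      T g x = C + ∫ z in x₀..x, phi s ε P g z := by
    intro g x hx
    rw [hTcoe, max_eq_left hx]
  have hTC : ∀ g : BoundedContinuousFunction ℝ ℝ, ∀ x : ℝ, x ≤ x₀ → T g x = C := by
    intro g x hx
    rw [hTcoe, max_eq_right hx, intervalIntegral.integral_same, add_zero]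
  -- iterated contraction estimate
  set K := 1 / (s * ε) with hK
  have hKpos : 0 < K := by positivity
  have hiter : ∀ n : ℕ, ∀ g₁ g₂ : BoundedContinuousFunction ℝ ℝ, ∀ x : ℝ, x₀ ≤ x →
      |T^[n] g₁ x - T^[n] g₂ x| ≤
        K ^ n * (Af s x₀ x) ^ n / (n.factorial : ℝ) * dist g₁ g₂ := by
    intro n
    induction n with
    | zero =>
      intro g₁ g₂ x hx
      simp only [Function.iterate_zero_apply, pow_zero, Nat.factorial_zero, Nat.cast_one,
        one_mul, mul_one, div_one]
      rw [← Real.dist_eq]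
      exact BoundedContinuousFunction.dist_coe_le_dist x
    | succ n IH =>
      intro g₁ g₂ x hx
      set u₁ := T^[n] g₁ with hu₁
      set u₂ := T^[n] g₂ with hu₂
      rw [Function.iterate_succ_apply', Function.iterate_succ_apply']
      rw [hTpt u₁ x hx, hTpt u₂ x hx]
      have hint1 : IntervalIntegrable (phi s ε P u₁) volume x₀ x :=
        intInt hx₀ (phi_cont hPc u₁.continuous) hx
      have hint2 : IntervalIntegrable (phi s ε P u₂) volume x₀ x :=
        intInt hx₀ (phi_cont hPc u₂.continuous) hx
      have hbnd : ContinuousOn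
          (fun z => K ^ (n + 1) * dist g₁ g₂ / (n.factorial : ℝ) *
            ((Af s x₀ z) ^ n * wf s z)) (Ioi 0) :=
        continuousOn_const.mul ((Af_cont.pow n).mul wf_cont)
      have key : |∫ z in x₀..x, (phi s ε P u₁ z - phi s ε P u₂ z)| ≤
          K ^ (n + 1) * dist g₁ g₂ / (n.factorial : ℝ) *
            ((Af s x₀ x) ^ (n + 1) / ((n : ℝ) + 1)) := by
        calc |∫ z in x₀..x, (phi s ε P u₁ z - phi s ε P u₂ z)|
            ≤ ∫ z in x₀..x, |phi s ε P u₁ z - phi s ε P u₂ z| :=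
              intervalIntegral.abs_integral_le_integral_abs hx
          _ ≤ ∫ z in x₀..x, K ^ (n + 1) * dist g₁ g₂ / (n.factorial : ℝ) *
                ((Af s x₀ z) ^ n * wf s z) := by
              apply intervalIntegral.integral_mono_on hx (hint1.sub hint2).abs
                (intInt hx₀ hbnd hx)
              intro z hz
              have hz0 : (0:ℝ) < z := hmem z hz.1
              have hdiff : phi s ε P u₁ z - phi s ε P u₂ z =
                  2 / s * (qf ε (u₁ z) - qf ε (u₂ z)) * wf s z := by
                simp only [phi]; ring
              rw [hdiff, abs_mul, abs_mul, abs_of_pos h2s, abs_of_pos (wf_pos hz0)]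
              have hlip : |qf ε (u₁ z) - qf ε (u₂ z)| ≤ |u₁ z - u₂ z| / (2 * ε) :=
                qf_lip hε _ _
              have hIH := IH g₁ g₂ z hz.1
              have hΔ : |qf ε (u₁ z) - qf ε (u₂ z)| ≤
                  K ^ n * (Af s x₀ z) ^ n / (n.factorial : ℝ) * dist g₁ g₂ / (2 * ε) :=
                le_trans hlip (by gcongr)
              have heq : 2 / s * (K ^ n * (Af s x₀ z) ^ n / (n.factorial : ℝ) *
                    dist g₁ g₂ / (2 * ε)) * wf s z =
                  K ^ (n + 1) * dist g₁ g₂ / (n.factorial : ℝ) *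
                    ((Af s x₀ z) ^ n * wf s z) := by
                rw [hK]
                have hfac : ((n.factorial : ℝ)) ≠ 0 := Nat.cast_ne_zero.2 n.factorial_ne_zero
                field_simp
                rw [pow_succ]
                field_simp
              refine le_trans ?_ (le_of_eq heq)
              have hwnn : 0 ≤ wf s z := (wf_pos hz0).le
              gcongr
          _ = K ^ (n + 1) * dist g₁ g₂ / (n.factorial : ℝ) *
                ∫ z in x₀..x, (Af s x₀ z) ^ n * wf s z :=
              intervalIntegral.integral_const_mul _ _
          _ = _ := by rw [Af_int hs hx₀ n hx]
      calc |C + (∫ z in x₀..x, phi s ε P u₁ z) - (C + ∫ z in x₀..x, phi s ε P u₂ z)|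
          = |∫ z in x₀..x, (phi s ε P u₁ z - phi s ε P u₂ z)| := by
            rw [intervalIntegral.integral_sub hint1 hint2]; ring_nf
        _ ≤ K ^ (n + 1) * dist g₁ g₂ / (n.factorial : ℝ) *
              ((Af s x₀ x) ^ (n + 1) / ((n : ℝ) + 1)) := key
        _ = K ^ (n + 1) * (Af s x₀ x) ^ (n + 1) / ((n + 1).factorial : ℝ) *
              dist g₁ g₂ := by
            rw [Nat.factorial_succ]
            push_cast
            field_simp
  -- distance bound for the iterates of T
  set Atop := s * x₀ ^ (-1 / s) with hAtop
  have hAtopnn : 0 ≤ Atop := mul_nonneg hs.le (Real.rpow_pos_of_pos hx₀ _).le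
  have hcnn : ∀ n : ℕ, 0 ≤ K ^ n * Atop ^ n / (n.factorial : ℝ) := by
    intro n
    positivity
  have hdist : ∀ n : ℕ, 1 ≤ n → ∀ g₁ g₂ : BoundedContinuousFunction ℝ ℝ,
      dist (T^[n] g₁) (T^[n] g₂) ≤ (K ^ n * Atop ^ n / (n.factorial : ℝ)) * dist g₁ g₂ := by
    intro n hn g₁ g₂
    rw [BoundedContinuousFunction.dist_le (mul_nonneg (hcnn n) dist_nonneg)]
    intro x
    rcases le_total x x₀ with hle | hge
    · obtain ⟨m, rfl⟩ := Nat.exists_eq_add_of_le hn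
      rw [add_comm 1 m, Function.iterate_succ_apply', Function.iterate_succ_apply',
        Real.dist_eq, hTC _ x hle, hTC _ x hle, sub_self, abs_zero]
      positivity
    · rw [Real.dist_eq]
      refine le_trans (hiter n g₁ g₂ x hge) ?_
      have h1 := Af_nonneg hs hx₀ hge
      have h2 := Af_le hs hx₀ hge
      gcongr
  -- choose a contracting iterate
  have htend : Tendsto (fun n : ℕ => (K * Atop) ^ n / (n.factorial : ℝ)) atTop (nhds 0) :=
    FloorSemiring.tendsto_pow_div_factorial_atTop _
  obtain ⟨n, hn1, hnge⟩ :=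
    ((htend.eventually (gt_mem_nhds one_pos)).and (eventually_ge_atTop 1)).exists
  have hcoef : K ^ n * Atop ^ n / (n.factorial : ℝ) < 1 := by
    rw [← mul_pow]; exact hn1
  set c : NNReal := ⟨K ^ n * Atop ^ n / (n.factorial : ℝ), hcnn n⟩ with hcdef
  have hcontr : ContractingWith c T^[n] := by
    constructor
    · exact_mod_cast hcoef
    · exact LipschitzWith.of_dist_le_mul (fun g₁ g₂ => hdist n hnge g₁ g₂)
  set h := ContractingWith.fixedPoint T^[n] hcontr with hhdef
  have hfixT : Function.IsFixedPt T h := hcontr.isFixedPt_fixedPoint_iterate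
  have hfix : ∀ x : ℝ, h x = C + ∫ z in x₀..max x x₀, phi s ε P h z := by
    intro x
    conv_lhs => rw [← hfixT]
    exact hTcoe h x
  -- the fixed point stays above ε²
  have hlow : ∀ x : ℝ, x₀ ≤ x → ε ^ 2 ≤ h x := by
    intro x hx
    have h1 := (htailQ h h.continuous _ (hMnn h) (hMg h) x hx).1
    have h2 := (htailP x hx).2
    rw [hfix x, max_eq_left hx, hsplit h h.continuous x hx, hC]
    nlinarith [mul_nonneg h2s.le (show (0:ℝ) ≤
      (∫ z in x₀..x, qf ε (h z) * wf s z) - (∫ z in x₀..x, Pfn s P z) + Dint by linarith)]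
  have hhpos : ∀ x : ℝ, x₀ ≤ x → 0 < h x := fun x hx =>
    lt_of_lt_of_le (by positivity) (hlow x hx)
  have hx₀h : h x₀ = C := by
    rw [hfix x₀, max_self, intervalIntegral.integral_same, add_zero]
  -- the fixed point satisfies the ODE
  have hderh : ∀ x : ℝ, x₀ ≤ x → HasDerivWithinAt h (phi s ε P h x) (Ici x₀) x := by
    intro x hx
    refine ((ftc hε hx₀ hPc h.continuous hx).const_add C).congr ?_ ?_
    · intro y hy
      rw [hfix y, max_eq_left (mem_Ici.1 hy)]
    · rw [hfix x, max_eq_left hx]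
  -- the solution
  refine ⟨fun x => x ^ (1 / s) * Real.sqrt (h x), ⟨?_, ?_⟩, ?_⟩
  · intro x hx
    exact mul_pos (Real.rpow_pos_of_pos (hmem x hx) _) (Real.sqrt_pos.2 (hhpos x hx))
  · intro x hx
    have hx' : x₀ ≤ x := hx
    have hx0 : (0:ℝ) < x := hmem x hx'
    have hhx : 0 < h x := hhpos x hx'
    have hbx : 0 < Real.sqrt (h x) := Real.sqrt_pos.2 hhx
    have h1 : HasDerivWithinAt (fun y => Real.sqrt (h y))
        (1 / (2 * Real.sqrt (h x)) * phi s ε P h x) (Ici x₀) x :=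
      (Real.hasDerivAt_sqrt (ne_of_gt hhx)).comp_hasDerivWithinAt x (hderh x hx')
    have h2 : HasDerivAt (fun y : ℝ => y ^ (1 / s)) (1 / s * x ^ (1 / s - 1)) x :=
      Real.hasDerivAt_rpow_const (Or.inl (ne_of_gt hx0))
    have h3 := h2.hasDerivWithinAt.mul h1
    refine h3.congr_deriv (Eq.symm ?_)
    set a := x ^ (1 / s) with ha
    set b := Real.sqrt (h x) with hb
    have hapos : 0 < a := Real.rpow_pos_of_pos hx0 _
    have hb2 : b ^ 2 = h x := Real.sq_sqrt hhx.le
    have hqf : qf ε (h x) = b := qf_eq (hlow x hx')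
    have e1 : x ^ (1 / s - 1) = a / x := by
      rw [ha, Real.rpow_sub hx0, Real.rpow_one]
    have e2 : wf s x = (x * a)⁻¹ := by
      rw [wf, show (-1 - 1 / s : ℝ) = -(1 + 1 / s) by ring, Real.rpow_neg hx0.le,
        Real.rpow_add hx0, Real.rpow_one]
    have e3 : x ^ (1 + 2 / s) = x * a ^ 2 := by
      rw [Real.rpow_add hx0, Real.rpow_one]
      congr 1
      rw [ha, ← Real.rpow_natCast (x ^ (1 / s)) 2, ← Real.rpow_mul hx0.le]
      congr 1
      push_cast
      ring
    simp only [phi, Pfn, hqf, e1, e2, e3]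
    field_simp
    ring
  · show x₀ ^ (1 / s) * Real.sqrt (h x₀) = _
    rw [hx₀h]



end DSAux

theorem stmt_0 (s : ℝ) (hs : 0 < s) (P : ℝ → ℝ) (hP : H1 P) (x₀ : ℝ) (hx₀ : 0 < x₀)
    (hInt : MeasureTheory.IntegrableOn (fun z => P z / z ^ (1 + 2 / s)) (Set.Ici x₀)) :
    (∀ ε > (0 : ℝ), ∃ γ : ℝ → ℝ,
        IsDSSolution s P γ (Set.Ici x₀) ∧
        γ x₀ = x₀ ^ (1 / s) *
          Real.sqrt (2 / s * (∫ z in Set.Ici x₀, P z / z ^ (1 + 2 / s)) + ε ^ 2)) ∧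
    ∃ γ : ℝ → ℝ, IsDSSolution s P γ (Set.Ici x₀) := by
  have hPc : ContinuousOn P (Set.Ici 0) := hP.1.continuousOn
  have hPnn : ∀ x, 0 < x → 0 ≤ P x := fun x hx => (hP.2.2 x hx).le
  have hInt' : MeasureTheory.IntegrableOn (DSAux.Pfn s P) (Set.Ici x₀) := hInt
  have key : ∀ ε > (0 : ℝ), ∃ γ : ℝ → ℝ,
      IsDSSolution s P γ (Set.Ici x₀) ∧
      γ x₀ = x₀ ^ (1 / s) *
        Real.sqrt (2 / s * (∫ z in Set.Ici x₀, P z / z ^ (1 + 2 / s)) + ε ^ 2) :=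
    fun ε hε => DSAux.main hs hε hx₀ hPc hPnn hInt'
  refine ⟨key, ?_⟩
  obtain ⟨γ, hγ, -⟩ := key 1 one_pos
  exact ⟨γ, hγ⟩
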